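/- Let Γ be a lattice in ℂ and let I : ℂ → ℂ be a fixpoint-free lift of an antiholomorphic involution of the torus ℂ/Γ. Then there exist r > 0 and a, c ∈ ℂ with a ≠ 0 such that a·Γ = {m + n·i·r : m, n ∈ ℤ} (a rectangular lattice), and the conjugated involution by the affine map φ(z) = a·z + c satisfies φ(I(φ⁻¹(z))) − (conj(z) + 1/2) ∈ {m + n·i·r : m, n ∈ ℤ} for all z ∈ ℂ, i.e. a·I((z − c)/a) + c − (conj(z) + 1/2) ∈ {m + n·i·r : m, n ∈ ℤ} for all z ∈ ℂ. -/

import Mathlib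

open Complex Set

lemma aux_const_of_countable {g : ℂ → ℂ} {S : Set ℂ} (hg : Continuous g)
    (hS : S.Countable) (hmem : ∀ z, g z ∈ S) (z w : ℂ) : g z = g w := by
  by_contra hne
  set d := dist (g z) (g w) with hd
  have hd0 : 0 < d := dist_pos.mpr hne
  set h : ℝ → ℝ := fun t => dist (g z) (g (z + t • (w - z))) with hh
  have hhc : Continuous h := by
    apply Continuous.dist continuous_const
    exact hg.comp (continuous_const.add (continuous_id.smul continuous_const))
  have h0 : h 0 = 0 := by simp [hh]
  have h1 : h 1 = d := by simp [hh, hd]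
  have hsub : Set.Icc (0:ℝ) d ⊆ h '' Set.Icc (0:ℝ) 1 := by
    have := intermediate_value_Icc (by norm_num : (0:ℝ) ≤ 1) hhc.continuousOn
    rwa [h0, h1] at this
  have hcnt : (h '' Set.Icc (0:ℝ) 1).Countable := by
    have : h '' Set.Icc (0:ℝ) 1 ⊆ (fun x => dist (g z) x) '' S := by
      rintro - ⟨t, -, rfl⟩
      exact ⟨_, hmem _, rfl⟩
    exact (hS.image _).mono this
  have : (Set.Icc (0:ℝ) d).Countable := hcnt.mono hsub
  have hcard := Cardinal.mk_Icc_real hd0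
  have : Countable (Set.Icc (0:ℝ) d) := this.to_subtype
  have : Cardinal.mk (Set.Icc (0:ℝ) d) ≤ Cardinal.aleph0 := Cardinal.mk_le_aleph0
  rw [hcard] at this
  exact absurd this (not_le.mpr Cardinal.aleph0_lt_continuum)

lemma aux_affine_form {Γ : Set ℂ} (hc : Γ.Countable) (I : ℂ → ℂ)
    (hent : Differentiable ℂ (fun z => I (starRingEnd ℂ z)))
    {ω ω' : ℂ} (hli : LinearIndependent ℝ ![ω, ω'])
    (hper : ∀ z : ℂ, ∀ w ∈ Γ, I (z + w) - I z ∈ Γ)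
    (hω : ω ∈ Γ) (hω' : ω' ∈ Γ) :
    ∃ α β : ℂ, ∀ z, I z = α * (starRingEnd ℂ z) + β := by
  set f : ℂ → ℂ := fun z => I (starRingEnd ℂ z) with hf
  -- step: translation by conj of lattice elements changes f by a constant
  have step : ∀ w ∈ Γ, ∀ z : ℂ,
      f (z + starRingEnd ℂ w) = f z + (f (starRingEnd ℂ w) - f 0) := by
    intro w hw z
    have hgc : Continuous (fun z => f (z + starRingEnd ℂ w) - f z) := by
      exact ((hent.continuous.comp (continuous_id.add continuous_const)).sub hent.continuous)
    have hmem : ∀ z : ℂ, f (z + starRingEnd ℂ w) - f z ∈ Γ := by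
      intro z
      have : starRingEnd ℂ (z + starRingEnd ℂ w) = starRingEnd ℂ z + w := by
        simp [map_add]
      simp only [hf, this]
      exact hper _ _ hw
    have := aux_const_of_countable hgc hc hmem z 0
    simp only [zero_add] at this
    linear_combination this
  -- hence deriv f is periodic
  have hderiv_per : ∀ w ∈ Γ, ∀ z : ℂ,
      deriv f (z + starRingEnd ℂ w) = deriv f z := by
    intro w hw z
    have hfun : (fun z => f (z + starRingEnd ℂ w)) = fun z => f z + (f (starRingEnd ℂ w) - f 0) :=
      funext (step w hw)
    have h1 : deriv (fun z => f (z + starRingEnd ℂ w)) z = deriv f (z + starRingEnd ℂ w) :=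
      deriv_comp_add_const ..
    rw [hfun] at h1
    rw [← h1, deriv_add_const]
  have hF : Differentiable ℂ (deriv f) := by
    have h1 : AnalyticOnNhd ℂ f Set.univ := analyticOnNhd_univ_iff_differentiable.mpr hent
    exact fun z => ((h1.deriv) z (mem_univ z)).differentiableAt
  -- deriv f is bounded: values on compact fundamental parallelogram
  have hintper : ∀ (z : ℂ) (w : ℂ), w ∈ Γ → ∀ n : ℤ,
      deriv f (z + (n : ℂ) * starRingEnd ℂ w) = deriv f z := by
    intro z w hw n
    induction n using Int.induction_on with
    | zero => simp
    | succ k ih =>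
        have e : z + ((k + 1 : ℤ) : ℂ) * starRingEnd ℂ w
            = (z + ((k : ℤ) : ℂ) * starRingEnd ℂ w) + starRingEnd ℂ w := by push_cast; ring
        rw [e, hderiv_per w hw, ih]
    | pred k ih =>
        have := hderiv_per w hw (z + ((-k - 1 : ℤ) : ℂ) * starRingEnd ℂ w)
        have e : z + ((-k - 1 : ℤ) : ℂ) * starRingEnd ℂ w + starRingEnd ℂ w
            = z + ((-k : ℤ) : ℂ) * starRingEnd ℂ w := by push_cast; ring
        rw [e] at this
        exact this.symm.trans ih
  -- linear independence of the conjugates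
  have hli' : LinearIndependent ℝ ![starRingEnd ℂ ω, starRingEnd ℂ ω'] := by
    have h2 : ![starRingEnd ℂ ω, starRingEnd ℂ ω'] = ⇑Complex.conjLIE.toLinearEquiv ∘ ![ω, ω'] := by
      funext i; fin_cases i <;> rfl
    rw [h2]
    exact hli.map' _ Complex.conjLIE.toLinearEquiv.ker
  have hcard : Fintype.card (Fin 2) = Module.finrank ℝ ℂ := by
    simp [Complex.finrank_real_complex]
  let b : Module.Basis (Fin 2) ℝ ℂ := basisOfLinearIndependentOfCardEqFinrank hli' hcard
  have hb0 : b 0 = starRingEnd ℂ ω := by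
    rw [show b = basisOfLinearIndependentOfCardEqFinrank hli' hcard from rfl,
      coe_basisOfLinearIndependentOfCardEqFinrank]
    rfl
  have hb1 : b 1 = starRingEnd ℂ ω' := by
    rw [show b = basisOfLinearIndependentOfCardEqFinrank hli' hcard from rfl,
      coe_basisOfLinearIndependentOfCardEqFinrank]
    rfl
  set K : Set ℂ := (fun p : ℝ × ℝ => p.1 • (starRingEnd ℂ ω) + p.2 • (starRingEnd ℂ ω')) ''
    (Icc (0:ℝ) 1 ×ˢ Icc (0:ℝ) 1) with hKdef
  have hK : IsCompact K := by
    apply (isCompact_Icc.prod isCompact_Icc).image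
    exact ((continuous_fst.smul continuous_const).add (continuous_snd.smul continuous_const))
  have hrange : range (deriv f) ⊆ deriv f '' K := by
    rintro - ⟨z, rfl⟩
    set x := b.repr z 0 with hx
    set y := b.repr z 1 with hy
    have hz : z = x • b 0 + y • b 1 := by
      have := b.sum_repr z
      rw [Fin.sum_univ_two] at this
      exact this.symm
    rw [hb0, hb1] at hz
    have e : z = (Int.fract x • (starRingEnd ℂ ω) + Int.fract y • (starRingEnd ℂ ω')
        + ((⌊y⌋ : ℤ) : ℂ) * (starRingEnd ℂ ω')) + ((⌊x⌋ : ℤ) : ℂ) * (starRingEnd ℂ ω) := by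
      rw [hz]
      simp only [Complex.real_smul, Int.fract]
      push_cast
      ring
    rw [e, hintper _ ω hω ⌊x⌋, hintper _ ω' hω' ⌊y⌋]
    refine ⟨_, ⟨(Int.fract x, Int.fract y), ⟨⟨Int.fract_nonneg x, (Int.fract_lt_one x).le⟩,
      ⟨Int.fract_nonneg y, (Int.fract_lt_one y).le⟩⟩, rfl⟩, rfl⟩
  have hbdd : Bornology.IsBounded (range (deriv f)) :=
    ((hK.image hF.continuous).isBounded).subset hrange
  set α := deriv f 0 with hα
  have hαz : ∀ z, deriv f z = α := fun z => hF.apply_eq_apply_of_bounded hbdd z 0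
  set g : ℂ → ℂ := fun z => f z - α * z with hg
  have hgd : Differentiable ℂ g := hent.sub (differentiable_id.const_mul α)
  have hgz : ∀ z, deriv g z = 0 := by
    intro z
    have h2 : DifferentiableAt ℂ (fun z : ℂ => α * z) z := by fun_prop
    rw [hg, deriv_fun_sub (hent z) h2]
    rw [deriv_const_mul_field]
    simp [hαz z]
  have hconst : ∀ z, g z = g 0 := fun z => is_const_of_deriv_eq_zero hgd hgz z 0
  refine ⟨α, f 0, fun z => ?_⟩
  have h1 : f (starRingEnd ℂ z) = I z := by
    simp only [hf, Complex.conj_conj]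
  have := hconst (starRingEnd ℂ z)
  simp only [hg, mul_zero, sub_zero] at this
  rw [h1] at this
  linear_combination this

lemma aux_cyclic (G : Set ℂ) (h0 : (0:ℂ) ∈ G)
    (hadd : ∀ x ∈ G, ∀ y ∈ G, x + y ∈ G)
    (hneg : ∀ x ∈ G, -x ∈ G) (e : ℂ) (habse : ‖e‖ = 1)
    (hdisc : ∃ ε > 0, ∀ γ ∈ G, γ ≠ 0 → ε ≤ ‖γ‖)
    (hnt : ∃ x : ℝ, x ≠ 0 ∧ (x : ℂ) * e ∈ G) :
    ∃ s : ℝ, 0 < s ∧ ∀ x : ℝ, ((x : ℂ) * e ∈ G ↔ ∃ n : ℤ, x = n * s) := by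
  set S : AddSubgroup ℝ :=
    { carrier := {x : ℝ | (x : ℂ) * e ∈ G}
      zero_mem' := by simpa using h0
      add_mem' := by
        intro x y hx hy
        have := hadd _ hx _ hy
        simpa [add_mul] using this
      neg_mem' := by
        intro x hx
        have := hneg _ hx
        simpa [neg_mul] using this } with hSdef
  have hSmem : ∀ x : ℝ, x ∈ S ↔ (x : ℂ) * e ∈ G := fun x => Iff.rfl
  obtain ⟨ε, hε, hdisc⟩ := hdisc
  rcases AddSubgroup.dense_or_cyclic S with hdense | ⟨a, ha⟩
  · exfalso
    obtain ⟨y, hyS, hy⟩ := hdense.exists_dist_lt (ε/2) (half_pos hε)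
    have hy0 : y ≠ 0 := by
      intro h
      rw [h, Real.dist_eq, sub_zero, abs_of_pos (half_pos hε)] at hy
      linarith
    have hyG : (y : ℂ) * e ∈ G := hyS
    have hne : (y : ℂ) * e ≠ 0 := by
      apply mul_ne_zero
      · exact_mod_cast hy0
      · intro h; rw [h] at habse; simp at habse
    have := hdisc _ hyG hne
    rw [norm_mul, habse, mul_one, Complex.norm_real, Real.norm_eq_abs] at this
    rw [Real.dist_eq] at hy
    have : |y| < ε := by
      have := abs_sub_abs_le_abs_sub y (ε/2)
      rw [abs_sub_comm] at hy
      have h2 : |ε/2| = ε/2 := abs_of_pos (half_pos hε)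
      cases abs_cases (ε/2 - y) <;> cases abs_cases y <;> linarith [hy]
    linarith
  · have ha0 : a ≠ 0 := by
      rintro rfl
      obtain ⟨x, hx0, hxG⟩ := hnt
      have hxS : x ∈ S := hxG
      rw [ha, AddSubgroup.mem_closure_singleton] at hxS
      obtain ⟨n, hn⟩ := hxS
      simp at hn
      exact hx0 hn.symm
    refine ⟨|a|, abs_pos.mpr ha0, fun x => ?_⟩
    rw [← hSmem, ha, AddSubgroup.mem_closure_singleton]
    constructor
    · rintro ⟨n, rfl⟩
      rcases abs_cases a with ⟨h, -⟩ | ⟨h, -⟩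
      · exact ⟨n, by rw [h]; push_cast [zsmul_eq_mul]; ring⟩
      · exact ⟨-n, by rw [h]; push_cast [zsmul_eq_mul]; ring⟩
    · rintro ⟨n, rfl⟩
      rcases abs_cases a with ⟨h, -⟩ | ⟨h, -⟩
      · exact ⟨n, by rw [h]; push_cast [zsmul_eq_mul]; ring⟩
      · exact ⟨-n, by rw [h]; push_cast [zsmul_eq_mul]; ring⟩

theorem stmt_11 (Γ : Set ℂ)
    (hΓ : ∃ ω ω' : ℂ, LinearIndependent ℝ ![ω, ω'] ∧
      Γ = {z : ℂ | ∃ m n : ℤ, z = m * ω + n * ω'})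
    (I : ℂ → ℂ)
    (hent : Differentiable ℂ (fun z => I (starRingEnd ℂ z)))
    (hper : ∀ z : ℂ, ∀ ω ∈ Γ, I (z + ω) - I z ∈ Γ)
    (hinv : ∀ z : ℂ, I (I z) - z ∈ Γ)
    (hfree : ∀ z : ℂ, I z - z ∉ Γ) :
    ∃ r : ℝ, 0 < r ∧ ∃ a c : ℂ, a ≠ 0 ∧
      (fun z => a * z) '' Γ = {z : ℂ | ∃ m n : ℤ, z = m + n * (Complex.I * r)} ∧
      ∀ z : ℂ, a * I ((z - c) / a) + c - (starRingEnd ℂ z + 1/2)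
        ∈ {z : ℂ | ∃ m n : ℤ, z = m + n * (Complex.I * r)} := by
  obtain ⟨ω, ω', hli, hΓeq⟩ := hΓ
  -- basic membership facts
  have hmem : ∀ z : ℂ, z ∈ Γ ↔ ∃ m n : ℤ, z = m * ω + n * ω' := by
    intro z; rw [hΓeq]; rfl
  have hΓ0 : (0 : ℂ) ∈ Γ := (hmem 0).mpr ⟨0, 0, by simp⟩
  have hΓadd : ∀ x ∈ Γ, ∀ y ∈ Γ, x + y ∈ Γ := by
    intro x hx y hy
    obtain ⟨m, n, rfl⟩ := (hmem x).mp hx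
    obtain ⟨m', n', rfl⟩ := (hmem y).mp hy
    exact (hmem _).mpr ⟨m + m', n + n', by push_cast; ring⟩
  have hΓneg : ∀ x ∈ Γ, -x ∈ Γ := by
    intro x hx
    obtain ⟨m, n, rfl⟩ := (hmem x).mp hx
    exact (hmem _).mpr ⟨-m, -n, by push_cast; ring⟩
  have hΓsub : ∀ x ∈ Γ, ∀ y ∈ Γ, x - y ∈ Γ := by
    intro x hx y hy
    rw [sub_eq_add_neg]; exact hΓadd x hx _ (hΓneg y hy)
  have hcnt : Γ.Countable := by
    have : Γ ⊆ Set.range (fun p : ℤ × ℤ => (p.1 : ℂ) * ω + (p.2 : ℂ) * ω') := by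
      intro z hz
      obtain ⟨m, n, rfl⟩ := (hmem z).mp hz
      exact ⟨(m, n), rfl⟩
    exact (Set.countable_range _).mono this
  -- discreteness
  have hdisc : ∃ ε > 0, ∀ γ ∈ Γ, γ ≠ 0 → ε ≤ ‖γ‖ := by
    have hcard : Fintype.card (Fin 2) = Module.finrank ℝ ℂ := by
      simp [Complex.finrank_real_complex]
    set b : Module.Basis (Fin 2) ℝ ℂ := basisOfLinearIndependentOfCardEqFinrank hli hcard with hbdef
    have hbr : Set.range ⇑b = Set.range ![ω, ω'] := by
      rw [hbdef, coe_basisOfLinearIndependentOfCardEqFinrank]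
    set N := Submodule.span ℤ (Set.range ⇑b) with hN
    have hdiscN : DiscreteTopology N := by infer_instance
    have hsubset : Γ ⊆ (N : Set ℂ) := by
      intro z hz
      obtain ⟨m, n, rfl⟩ := (hmem z).mp hz
      rw [hN, hbr]
      have : Set.range ![ω, ω'] = {ω, ω'} := by
        rw [Set.range_eq_iff]
        constructor
        · intro i; fin_cases i <;> simp
        · rintro x (rfl | rfl)
          exacts [⟨0, rfl⟩, ⟨1, rfl⟩]
      rw [this, SetLike.mem_coe, Submodule.mem_span_pair]
      exact ⟨m, n, by push_cast [zsmul_eq_mul]; ring⟩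
    have hopen : IsOpen ({(0 : N)} : Set N) := isOpen_discrete _
    rw [Metric.isOpen_iff] at hopen
    obtain ⟨ε, hε, hball⟩ := hopen 0 rfl
    refine ⟨ε, hε, fun γ hγ hγ0 => ?_⟩
    by_contra hlt
    push_neg at hlt
    have hγN : γ ∈ N := hsubset hγ
    have : (⟨γ, hγN⟩ : N) ∈ Metric.ball (0 : N) ε := by
      rw [Metric.mem_ball, Subtype.dist_eq]
      simpa [Complex.dist_eq] using hlt
    have := hball this
    rw [Set.mem_singleton_iff, Subtype.ext_iff] at this
    exact hγ0 this
  -- the affine form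
  obtain ⟨α, β, hform⟩ := aux_affine_form hcnt I hent hli hper
    ((hmem ω).mpr ⟨1, 0, by simp⟩) ((hmem ω').mpr ⟨0, 1, by simp⟩)
  -- conj-lattice mapping
  have h1 : ∀ w ∈ Γ, α * starRingEnd ℂ w ∈ Γ := by
    intro w hw
    have := hper 0 w hw
    rw [hform, hform, zero_add] at this
    simpa using this
  -- alpha is unitary
  have huncnt : ¬ (Set.univ : Set ℂ).Countable := by
    have : Uncountable ℂ := Complex.ofReal_injective.uncountable
    rw [Set.countable_univ_iff]
    exact not_countable
  -- unitarity of α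
  have hkey : ∀ z : ℂ, (α * starRingEnd ℂ α - 1) * z + (α * starRingEnd ℂ β + β) ∈ Γ := by
    intro z
    have h2 := hinv z
    rw [hform (I z), hform z] at h2
    have e : α * starRingEnd ℂ (α * starRingEnd ℂ z + β) + β - z
        = (α * starRingEnd ℂ α - 1) * z + (α * starRingEnd ℂ β + β) := by
      simp only [map_add, map_mul, Complex.conj_conj]
      ring
    rwa [e] at h2
  have hαβΓ : α * starRingEnd ℂ β + β ∈ Γ := by simpa using hkey 0
  have hscale : ∀ z : ℂ, (α * starRingEnd ℂ α - 1) * z ∈ Γ := by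
    intro z
    have := hΓsub _ (hkey z) _ hαβΓ
    simpa using this
  have hαα : α * starRingEnd ℂ α = 1 := by
    by_contra hne
    have hc0 : α * starRingEnd ℂ α - 1 ≠ 0 := sub_ne_zero.mpr hne
    apply huncnt
    have hsub2 : (Set.univ : Set ℂ) ⊆ Γ := by
      intro w _
      have := hscale (w / (α * starRingEnd ℂ α - 1))
      rwa [mul_div_cancel₀ _ hc0] at this
    exact hcnt.mono hsub2
  have hα0 : α ≠ 0 := by
    intro h; rw [h] at hαα; simp at hαα
  obtain ⟨u, hu2⟩ := IsAlgClosed.exists_pow_nat_eq (starRingEnd ℂ α) (by norm_num : 0 < 2)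
  have huu : u * starRingEnd ℂ u = 1 := by
    have h2 : (u * starRingEnd ℂ u) ^ 2 = 1 := by
      rw [mul_pow, hu2, ← map_pow, hu2, Complex.conj_conj]
      linear_combination hαα
    have h3 : ((Complex.normSq u : ℝ) : ℂ) ^ 2 = 1 := by
      rw [← Complex.mul_conj]; exact h2
    have h4 : (Complex.normSq u : ℝ) ^ 2 = 1 := by exact_mod_cast h3
    have h5 : (0 : ℝ) ≤ Complex.normSq u := Complex.normSq_nonneg u
    have h6 : (Complex.normSq u : ℝ) = 1 := by nlinarith
    rw [Complex.mul_conj, h6, Complex.ofReal_one]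
  have hu0 : u ≠ 0 := by
    intro h; rw [h] at huu; simp at huu
  have habsu : ‖u‖ = 1 := by
    have := Complex.mul_conj u
    rw [huu] at this
    have h6 : Complex.normSq u = 1 := by exact_mod_cast this.symm
    rw [← Complex.sq_norm] at h6
    nlinarith [norm_nonneg u]
  have hαu : u * α = starRingEnd ℂ u := by
    have h7 : u * (u * α) = u * starRingEnd ℂ u := by
      rw [huu]; linear_combination α * hu2 + hαα
    exact mul_left_cancel₀ hu0 h7
  -- the rotated lattice
  set Γ' : Set ℂ := (fun z => u * z) '' Γ with hΓ'def
  have hι : ∀ γ ∈ Γ, u * γ ∈ Γ' := fun γ hγ => ⟨γ, hγ, rfl⟩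
  have hπ : ∀ w ∈ Γ', ∃ γ ∈ Γ, w = u * γ := by
    rintro w ⟨γ, hγ, rfl⟩; exact ⟨γ, hγ, rfl⟩
  have hΓ'0 : (0 : ℂ) ∈ Γ' := ⟨0, hΓ0, mul_zero u⟩
  have hΓ'add : ∀ x ∈ Γ', ∀ y ∈ Γ', x + y ∈ Γ' := by
    rintro - ⟨x, hx, rfl⟩ - ⟨y, hy, rfl⟩
    refine ⟨x + y, hΓadd x hx y hy, ?_⟩
    dsimp only
    ring
  have hΓ'neg : ∀ x ∈ Γ', -x ∈ Γ' := by
    rintro - ⟨x, hx, rfl⟩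
    refine ⟨-x, hΓneg x hx, ?_⟩
    dsimp only
    ring
  have hΓ'sub : ∀ x ∈ Γ', ∀ y ∈ Γ', x - y ∈ Γ' := by
    intro x hx y hy
    rw [sub_eq_add_neg]; exact hΓ'add x hx _ (hΓ'neg y hy)
  have hΓ'conj : ∀ w ∈ Γ', starRingEnd ℂ w ∈ Γ' := by
    rintro - ⟨γ, hγ, rfl⟩
    have : starRingEnd ℂ (u * γ) = u * (α * starRingEnd ℂ γ) := by
      rw [map_mul, ← hαu]; ring
    rw [this]
    exact hι _ (h1 γ hγ)
  have hΓ'free : ∀ w : ℂ, starRingEnd ℂ w + (u * β) - w ∉ Γ' := by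
    intro w hw
    obtain ⟨γ, hγ, hγe⟩ := hπ _ hw
    apply hfree (w / u)
    have hcu0 : starRingEnd ℂ u ≠ 0 := by simp [hu0]
    have hIw : I (w / u) - w / u = γ := by
      rw [hform, map_div₀]
      have e1 : starRingEnd ℂ w / starRingEnd ℂ u = starRingEnd ℂ w * u := by
        rw [div_eq_iff hcu0]
        linear_combination (-(starRingEnd ℂ w)) * huu
      rw [e1]
      have hdiv : u * (w / u) = w := by field_simp
      have e2 : u * (α * (starRingEnd ℂ w * u) + β - w / u) = u * γ := by
        rw [← hγe]
        linear_combination (u * starRingEnd ℂ w) * hαu + (starRingEnd ℂ w) * huu - hdiv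
      exact mul_left_cancel₀ hu0 e2
    rw [hIw]; exact hγ
  -- nontrivial real and imaginary parts exist in Γ'
  have hpair := LinearIndependent.pair_iff.mp (by exact hli)
  have hω0 : ω ≠ 0 := by
    intro h
    have := (hpair 1 0 (by simp [h])).1
    norm_num at this
  have huω0 : u * ω ≠ 0 := mul_ne_zero hu0 hω0
  have hre : ∃ w ∈ Γ', w.re ≠ 0 := by
    by_contra hno
    push_neg at hno
    have ha : (u * ω).re = 0 := hno _ (hι ω ((hmem ω).mpr ⟨1, 0, by simp⟩))
    have hb : (u * ω').re = 0 := hno _ (hι ω' ((hmem ω').mpr ⟨0, 1, by simp⟩))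
    set p := (u * ω).im with hp
    set q := (u * ω').im with hq
    have e1 : u * ω = (p : ℂ) * Complex.I := by
      apply Complex.ext <;> simp only [hp] <;> simp [ha]
    have e2 : u * ω' = (q : ℂ) * Complex.I := by
      apply Complex.ext <;> simp only [hq] <;> simp [hb]
    have e3 : u * ((q : ℂ) * ω - (p : ℂ) * ω') = 0 := by
      have : (q:ℂ) * (u * ω) - (p:ℂ) * (u * ω') = 0 := by rw [e1, e2]; ring
      linear_combination this
    have e4 : (q : ℂ) * ω - (p : ℂ) * ω' = 0 := by
      rcases mul_eq_zero.mp e3 with h | h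
      · exact absurd h hu0
      · exact h
    have e5 : q • ω + (-p) • ω' = 0 := by
      simp only [Complex.real_smul]
      push_cast
      linear_combination e4
    obtain ⟨h6, h7⟩ := hpair q (-p) e5
    apply huω0
    apply Complex.ext
    · exact ha
    · simpa [p] using (neg_eq_zero.mp h7)
  have him : ∃ w ∈ Γ', w.im ≠ 0 := by
    by_contra hno
    push_neg at hno
    have ha : (u * ω).im = 0 := hno _ (hι ω ((hmem ω).mpr ⟨1, 0, by simp⟩))
    have hb : (u * ω').im = 0 := hno _ (hι ω' ((hmem ω').mpr ⟨0, 1, by simp⟩))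
    set p := (u * ω).re with hp
    set q := (u * ω').re with hq
    have e1 : u * ω = (p : ℂ) := by
      apply Complex.ext <;> simp only [hp] <;> simp [ha]
    have e2 : u * ω' = (q : ℂ) := by
      apply Complex.ext <;> simp only [hq] <;> simp [hb]
    have e3 : u * ((q : ℂ) * ω - (p : ℂ) * ω') = 0 := by
      have : (q:ℂ) * (u * ω) - (p:ℂ) * (u * ω') = 0 := by rw [e1, e2]; ring
      linear_combination this
    have e4 : (q : ℂ) * ω - (p : ℂ) * ω' = 0 := by
      rcases mul_eq_zero.mp e3 with h | h
      · exact absurd h hu0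
      · exact h
    have e5 : q • ω + (-p) • ω' = 0 := by
      simp only [Complex.real_smul]
      push_cast
      linear_combination e4
    obtain ⟨h6, h7⟩ := hpair q (-p) e5
    apply huω0
    apply Complex.ext
    · simpa [p] using (neg_eq_zero.mp h7)
    · exact ha
  -- discreteness transfers to Γ'
  have hdisc' : ∃ ε > 0, ∀ γ ∈ Γ', γ ≠ 0 → ε ≤ ‖γ‖ := by
    obtain ⟨ε, hε, hd⟩ := hdisc
    refine ⟨ε, hε, ?_⟩
    rintro - ⟨γ, hγ, rfl⟩ hne
    have hγ0 : γ ≠ 0 := by rintro rfl; simp at hne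
    have := hd γ hγ hγ0
    calc ε ≤ ‖γ‖ := this
    _ = ‖u * γ‖ := by rw [norm_mul, habsu, one_mul]
    _ = ‖(fun z => u * z) γ‖ := rfl
  obtain ⟨s, hs, hSmem⟩ := aux_cyclic Γ' hΓ'0 hΓ'add hΓ'neg 1 (by simp) hdisc' (by
    obtain ⟨w, hw, hwre⟩ := hre
    refine ⟨2 * w.re, by simpa using hwre, ?_⟩
    have h2 := hΓ'add w hw _ (hΓ'conj w hw)
    rw [Complex.add_conj] at h2
    convert h2 using 1 <;> (push_cast; ring))
  obtain ⟨t, ht, hTmem⟩ := aux_cyclic Γ' hΓ'0 hΓ'add hΓ'neg Complex.I (by simp) hdisc' (by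
    obtain ⟨w, hw, hwim⟩ := him
    refine ⟨2 * w.im, by simpa using hwim, ?_⟩
    have h2 := hΓ'sub w hw _ (hΓ'conj w hw)
    rw [Complex.sub_conj] at h2
    convert h2 using 1 <;> (push_cast; ring))
  have hS1 : ∀ x : ℝ, ((x : ℂ) ∈ Γ' ↔ ∃ n : ℤ, x = n * s) := by
    intro x
    rw [← hSmem x, mul_one]
  have halfRe : ∀ w ∈ Γ', ∃ k : ℤ, 2 * w.re = k * s := by
    intro w hw
    have h2 := hΓ'add w hw _ (hΓ'conj w hw)
    rw [Complex.add_conj] at h2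
    have h3 : (((2 : ℝ) * w.re : ℝ) : ℂ) ∈ Γ' := by
      convert h2 using 1 <;> (push_cast; ring)
    exact (hS1 _).mp h3
  -- the translation part
  set β₀ := u * β with hβ₀def
  have hββ : β₀ + starRingEnd ℂ β₀ ∈ Γ' := by
    have h2 := hι _ hαβΓ
    have e : u * (α * starRingEnd ℂ β + β) = β₀ + starRingEnd ℂ β₀ := by
      rw [hβ₀def, map_mul]
      linear_combination (starRingEnd ℂ β) * hαu
    rwa [← e]
  obtain ⟨k₀, hk₀⟩ : ∃ k : ℤ, 2 * β₀.re = k * s := by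
    rw [Complex.add_conj] at hββ
    have h3 : (((2 : ℝ) * β₀.re : ℝ) : ℂ) ∈ Γ' := by
      convert hββ using 1 <;> (push_cast; ring)
    exact (hS1 _).mp h3
  -- no fixed points: no lattice point has the same real part as β₀
  have hfree2 : ∀ w ∈ Γ', w.re ≠ β₀.re := by
    intro w hw hre_eq
    set v : ℂ := Complex.I * ((β₀.im - w.im) / 2 : ℝ) with hv
    apply hΓ'free v
    have hconjv : starRingEnd ℂ v = -v := by
      rw [hv, map_mul, Complex.conj_I, Complex.conj_ofReal]; ring
    have e : starRingEnd ℂ v + u * β - v = w := by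
      rw [hconjv, ← hβ₀def]
      have : -v + β₀ - v = β₀ - 2 * v := by ring
      rw [this]
      apply Complex.ext
      · simp [hv, ← hre_eq]
      · simp [hv]
        ring
    rw [e]; exact hw
  have hk₀odd : Odd k₀ := by
    rcases Int.even_or_odd k₀ with ⟨m, hm⟩ | h
    · exfalso
      have h2 : (((m : ℝ) * s : ℝ) : ℂ) ∈ Γ' := (hS1 _).mpr ⟨m, rfl⟩
      apply hfree2 _ h2
      rw [Complex.ofReal_re]
      rw [hm] at hk₀
      push_cast at hk₀
      linarith
    · exact h
  obtain ⟨m₀, hm₀⟩ := hk₀odd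
  rw [hm₀] at hk₀
  push_cast at hk₀
  have hrectRe : ∀ w ∈ Γ', ∃ m : ℤ, w.re = m * s := by
    intro w hw
    obtain ⟨k, hk⟩ := halfRe w hw
    rcases Int.even_or_odd k with ⟨m, hm⟩ | ⟨m, hm⟩
    · refine ⟨m, ?_⟩
      rw [hm] at hk
      push_cast at hk
      linarith
    · exfalso
      rw [hm] at hk
      push_cast at hk
      have h3 : ((((m₀ - m : ℤ) : ℝ) * s : ℝ) : ℂ) ∈ Γ' := (hS1 _).mpr ⟨m₀ - m, rfl⟩
      have h4 := hΓ'add w hw _ h3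
      apply hfree2 _ h4
      rw [Complex.add_re, Complex.ofReal_re]
      push_cast
      linear_combination hk / 2 - hk₀ / 2
  have hrect : ∀ w ∈ Γ', ∃ m n : ℤ, w = (m : ℂ) * s + (n : ℂ) * t * Complex.I := by
    intro w hw
    obtain ⟨m, hm⟩ := hrectRe w hw
    have hms : (((m : ℝ) * s : ℝ) : ℂ) ∈ Γ' := (hS1 _).mpr ⟨m, rfl⟩
    have hw' : w - ((m : ℝ) * s : ℝ) ∈ Γ' := hΓ'sub w hw _ hms
    have hre0 : (w - (((m : ℝ) * s : ℝ) : ℂ)).re = 0 := by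
      rw [Complex.sub_re, Complex.ofReal_re, hm]; push_cast; ring
    have heq : w - (((m : ℝ) * s : ℝ) : ℂ) = ((w.im : ℝ) : ℂ) * Complex.I := by
      apply Complex.ext
      · rw [hre0]; simp
      · simp
    obtain ⟨n, hn⟩ := (hTmem w.im).mp (by rw [← heq]; exact hw')
    refine ⟨m, n, ?_⟩
    have : w = (((m : ℝ) * s : ℝ) : ℂ) + ((w.im : ℝ) : ℂ) * Complex.I := by
      rw [← heq]; ring
    rw [this, hn]
    push_cast; ring
  have hrect' : ∀ m n : ℤ, (m : ℂ) * s + (n : ℂ) * t * Complex.I ∈ Γ' := by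
    intro m n
    have h1' : (((m : ℝ) * s : ℝ) : ℂ) ∈ Γ' := (hS1 _).mpr ⟨m, rfl⟩
    have h2' : (((n : ℝ) * t : ℝ) : ℂ) * Complex.I ∈ Γ' := (hTmem _).mpr ⟨n, rfl⟩
    have := hΓ'add _ h1' _ h2'
    convert this using 2 <;> push_cast <;> ring
  -- final construction
  have hs0 : ((s : ℝ) : ℂ) ≠ 0 := by exact_mod_cast hs.ne'
  have hcu0 : starRingEnd ℂ u ≠ 0 := by simp [hu0]
  set a : ℂ := u / ((s : ℝ) : ℂ) with hadef
  set c : ℂ := -(Complex.I * ((β₀.im / (2 * s) : ℝ) : ℂ)) with hcdef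
  have ha0 : a ≠ 0 := div_ne_zero hu0 hs0
  refine ⟨t / s, div_pos ht hs, a, c, ha0, ?_, ?_⟩
  · ext z
    simp only [Set.mem_image, Set.mem_setOf_eq]
    constructor
    · rintro ⟨γ, hγ, rfl⟩
      obtain ⟨m, n, huγ⟩ := hrect _ (hι γ hγ)
      refine ⟨m, n, ?_⟩
      rw [hadef]
      push_cast
      field_simp
      linear_combination huγ
    · rintro ⟨m, n, rfl⟩
      obtain ⟨γ, hγ, hγe⟩ := hπ _ (hrect' m n)
      refine ⟨γ, hγ, ?_⟩
      rw [hadef]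
      push_cast
      field_simp
      linear_combination -hγe
  · intro z
    have haα : a * α = starRingEnd ℂ a := by
      rw [hadef, map_div₀, Complex.conj_ofReal, div_mul_eq_mul_div, hαu]
    have hconjc : starRingEnd ℂ c = -c := by
      rw [hcdef, map_neg, map_mul, Complex.conj_I, Complex.conj_ofReal]
      ring
    have hk₀c : (2 : ℂ) * (β₀.re : ℂ) = (2 * (m₀ : ℂ) + 1) * ((s : ℝ) : ℂ) := by
      have := congrArg (fun x : ℝ => (x : ℂ)) hk₀
      push_cast at this
      linear_combination this
    have hβ₀eq : β₀ = (β₀.re : ℂ) + (β₀.im : ℂ) * Complex.I := (Complex.re_add_im β₀).symm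
    have hrest : a * β + c - starRingEnd ℂ c - (1/2 : ℂ) = (m₀ : ℂ) := by
      rw [hconjc, hadef, hcdef]
      have hc2 : ((β₀.im / (2 * s) : ℝ) : ℂ) = (β₀.im : ℂ) / (2 * ((s:ℝ):ℂ)) := by
        push_cast; ring
      rw [hc2]
      rw [div_mul_eq_mul_div]
      rw [hβ₀def] at hβ₀eq
      have hmul : u * β * 2 - Complex.I * (β₀.im : ℂ) * 2 - ((s:ℝ):ℂ)
          = (m₀ : ℂ) * (2 * ((s:ℝ):ℂ)) := by
        linear_combination 2 * hβ₀eq + hk₀c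
      have hsinv : ((s:ℝ):ℂ) * ((s:ℝ):ℂ)⁻¹ = 1 := mul_inv_cancel₀ hs0
      linear_combination (1 / (2 * ((s:ℝ):ℂ))) * hmul + (1/2 + (m₀:ℂ)) * hsinv
    have key : ∀ w : ℂ, a * I w + c - (starRingEnd ℂ (a * w + c) + 1/2) = (m₀ : ℂ) := by
      intro w
      rw [hform w, map_add, map_mul]
      linear_combination (starRingEnd ℂ w) * haα + hrest
    have hz : a * ((z - c) / a) + c = z := by
      rw [mul_div_cancel₀ _ ha0, sub_add_cancel]
    have := key ((z - c) / a)
    rw [hz] at this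
    refine ⟨m₀, 0, ?_⟩
    rw [this]
    push_cast
    ring
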